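/- For ν = 1, the polynomials F̃_{s,b}(L, q) (defined as multisums with q-binomial coefficients, which for ν=1 reduce to single sums) satisfy the recurrences F̃_{s,0}(L,q) = F̃_{s,1}(L-1,q) and F̃_{s,1}(L,q) = F̃_{s,0}(L-1,q) + F̃_{s,1}(L-1,q) + (q^{L-1}-1) F̃_{s,1}(L-2,q), with initial conditions F̃_{s,b}(0,q) = δ_{s,b}, for s, b ∈ {0,1}. -/

import Mathlib

open Finset

/-- The formal variable `q` in the field of rational functions over `ℚ`. -/
noncomputable def q : RatFunc ℚ := RatFunc.X

/-- Gaussian binomial coefficient `qbinom(N, K) = (q^{K+1}; q)_{N-K} / (q; q)_{N-K}`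
in the variable `p`, with the convention of the paper: it is defined (by this formula)
whenever `N - K ≥ 0`, and is `0` otherwise.  (In particular `qbinom(-1, -1) = 1`.) -/
noncomputable def qbin (p : RatFunc ℚ) (N K : ℤ) : RatFunc ℚ :=
  if K ≤ N then
    (∏ j ∈ Finset.range (N - K).toNat, (1 - p ^ (K + 1 + (j : ℤ)))) /
    (∏ j ∈ Finset.range (N - K).toNat, (1 - p ^ ((j : ℤ) + 1)))
  else 0

/-- For `ν = 1`: `F̃_{s,b}(L, q) = Σ_{n₁} q^{n₁² + χ(1>s)n₁} qbinom(n₁ + m₁, n₁)`, with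
`m₁ = L - 2n₁ - χ(1>s)(1-s) - χ(1>b)(1-b)`, the sum running over all integers `n₁` for
which the q-binomial is nonzero (a `finsum` over `ℤ`). -/
noncomputable def Ft (s b : ℕ) (L : ℤ) : RatFunc ℚ :=
  ∑ᶠ n : ℤ,
    q ^ (n ^ 2 + (if s = 0 then n else 0)) *
      qbin q (n + (L - 2 * n - (if s = 0 then 1 else 0) - (if b = 0 then 1 else 0))) n

lemma q_ne_zero : q ≠ 0 := RatFunc.X_ne_zero

lemma q_pow_nat_ne_one {n : ℕ} (hn : 0 < n) : q ^ (n : ℤ) ≠ 1 := by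
  rw [zpow_natCast]
  intro h
  have h2 : (Polynomial.X : Polynomial ℚ) ^ n = 1 := by
    apply RatFunc.algebraMap_injective ℚ
    rw [map_pow, map_one, RatFunc.algebraMap_X]
    exact h
  have h3 := congrArg Polynomial.natDegree h2
  simp [Polynomial.natDegree_X_pow] at h3
  omega

lemma one_sub_q_pow_ne_zero {n : ℕ} (hn : 0 < n) : 1 - q ^ (n : ℤ) ≠ 0 := by
  intro h
  exact q_pow_nat_ne_one hn (by linear_combination -h)

lemma den_ne_zero (m : ℕ) : (∏ j ∈ range m, (1 - q ^ ((j:ℤ)+1))) ≠ 0 := by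
  apply Finset.prod_ne_zero_iff.mpr
  intro j _
  have h : ((j:ℤ)+1) = ((j+1:ℕ):ℤ) := by push_cast; ring
  rw [h]; exact one_sub_q_pow_ne_zero (Nat.succ_pos j)

lemma key_prod (n : ℤ) (k : ℕ) :
    (∏ j ∈ range (k+1), (1 - q ^ (n + 1 + (j:ℤ)))) / (∏ j ∈ range (k+1), (1 - q ^ ((j:ℤ)+1)))
    = (∏ j ∈ range k, (1 - q ^ (n + 1 + (j:ℤ)))) / (∏ j ∈ range k, (1 - q ^ ((j:ℤ)+1)))
      + q ^ ((k:ℤ)+1) * ((∏ j ∈ range (k+1), (1 - q ^ (n + (j:ℤ)))) / (∏ j ∈ range (k+1), (1 - q ^ ((j:ℤ)+1)))) := by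
  have hnum : (∏ j ∈ range (k+1), (1 - q ^ (n + 1 + (j:ℤ))))
      = (∏ j ∈ range k, (1 - q ^ (n + 1 + (j:ℤ)))) * (1 - q ^ (n + 1 + (k:ℤ))) :=
    Finset.prod_range_succ _ _
  have hQ : (∏ j ∈ range (k+1), (1 - q ^ (n + (j:ℤ))))
      = (∏ j ∈ range k, (1 - q ^ (n + 1 + (j:ℤ)))) * (1 - q ^ n) := by
    rw [Finset.prod_range_succ']
    congr 1
    · apply Finset.prod_congr rfl
      intro j _
      congr 1
      push_cast
      ring
    · norm_num
  have hden : (∏ j ∈ range (k+1), (1 - q ^ ((j:ℤ)+1)))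
      = (∏ j ∈ range k, (1 - q ^ ((j:ℤ)+1))) * (1 - q ^ ((k:ℤ)+1)) := by
    rw [Finset.prod_range_succ]
  have hD := den_ne_zero k
  have hD1 : (1 - q ^ ((k:ℤ)+1)) ≠ 0 := by
    have h : ((k:ℤ)+1) = ((k+1:ℕ):ℤ) := by push_cast; ring
    rw [h]; exact one_sub_q_pow_ne_zero (Nat.succ_pos k)
  have hz : q ^ (n + 1 + (k:ℤ)) = q ^ ((k:ℤ)+1) * q ^ n := by
    rw [← zpow_add₀ q_ne_zero]; ring_nf
  rw [hnum, hQ, hden, hz]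
  set a := (∏ j ∈ range k, (1 - q ^ ((j:ℤ)+1))) with ha
  set b := (∏ j ∈ range k, (1 - q ^ (n + 1 + (j:ℤ)))) with hb
  set x := q ^ n with hx
  set y := q ^ ((k:ℤ)+1) with hy
  field_simp
  ring

lemma qbin_pascal (N n : ℤ) :
    qbin q N n = qbin q (N-1) n + q ^ (N - n) * qbin q (N-1) (n-1) := by
  rcases lt_trichotomy N n with h | h | h
  · unfold qbin
    rw [if_neg (by omega), if_neg (by omega), if_neg (by omega)]
    ring
  · subst h
    unfold qbin
    rw [if_pos le_rfl, if_neg (by omega), if_pos (by omega)]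
    simp
  · obtain ⟨k, hk⟩ : ∃ k : ℕ, N - n = (k:ℤ) + 1 := ⟨(N - n - 1).toNat, by omega⟩
    unfold qbin
    rw [if_pos (by omega), if_pos (by omega), if_pos (by omega)]
    have h1 : (N - n).toNat = k + 1 := by omega
    have h2 : (N - 1 - n).toNat = k := by omega
    have h3 : (N - 1 - (n-1)).toNat = k + 1 := by omega
    have h4 : ∀ j:ℕ, n - 1 + 1 + (j:ℤ) = n + j := by intro j; ring
    rw [h1, h2, h3, hk]
    simp only [h4]
    exact key_prod n k

lemma qbin_eq_zero_of_gt {N K : ℤ} (h : N < K) : qbin q N K = 0 :=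
  if_neg (not_le.mpr h)

lemma qbin_eq_zero_of_neg {N K : ℤ} (hK : K < 0) (hN : 0 ≤ N) : qbin q N K = 0 := by
  unfold qbin
  rw [if_pos (by omega)]
  have hj : (-K-1).toNat ∈ Finset.range (N-K).toNat := Finset.mem_range.mpr (by omega)
  rw [Finset.prod_eq_zero hj, zero_div]
  have : K + 1 + (((-K-1).toNat : ℕ) : ℤ) = 0 := by omega
  rw [this, zpow_zero, sub_self]

lemma fin_helper (f : ℤ → RatFunc ℚ) (A v : ℤ) (N K : ℤ → ℤ)
    (hN : ∀ n, N n = A - n) (hK : ∀ n, K n = n - v)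
    (hf : ∀ n, f n ≠ 0 → qbin q (N n) (K n) ≠ 0) :
    (Function.support f).Finite := by
  apply Set.Finite.subset (Set.finite_Icc (min v (A+1)) (A + v - min v (A+1)))
  intro n hn
  have h1 : qbin q (N n) (K n) ≠ 0 := hf n hn
  rw [hN, hK] at h1
  have h2 : n - v ≤ A - n := by
    by_contra hc; exact h1 (qbin_eq_zero_of_gt (by omega))
  have h3 : 0 ≤ n - v ∨ A - n ≤ -1 := by
    by_contra hc; push_neg at hc
    exact h1 (qbin_eq_zero_of_neg (by omega) (by omega))
  simp only [Set.mem_Icc]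
  omega

/-- The one-variable sum underlying all the `Ft s b`. -/
noncomputable def G (c L : ℤ) : RatFunc ℚ :=
  ∑ᶠ n : ℤ, q ^ (n^2 + c*n) * qbin q (L - n - c) n

lemma Ft_eq_G (s b : ℕ) (hs : s ≤ 1) (hb : b ≤ 1) (L : ℤ) :
    Ft s b L = G (if s = 0 then 1 else 0) (L - (if b = 0 then 1 else 0)) := by
  unfold Ft G
  refine finsum_congr fun n => ?_
  interval_cases s <;> interval_cases b <;> norm_num <;>
    exact Or.inl (by apply congrArg (fun A => qbin q A n); ring)

lemma G_fin (c L : ℤ) :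
    (Function.support fun n : ℤ => q ^ (n^2 + c*n) * qbin q (L - n - c) n).Finite := by
  apply fin_helper _ (L - c) 0 (fun n => L - n - c) (fun n => n)
  · intro n; ring
  · intro n; ring
  · intro n hn h
    exact hn (by rw [h, mul_zero])

lemma G_fin2 (c L : ℤ) :
    (Function.support fun n : ℤ =>
      q ^ (n^2 + c*n + (L - 2*n - c)) * qbin q (L - 1 - n - c) (n-1)).Finite := by
  apply fin_helper _ (L - 1 - c) 1 (fun n => L - 1 - n - c) (fun n => n - 1)
  · intro n; ring
  · intro n; ring
  · intro n hn h
    exact hn (by rw [h, mul_zero])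

lemma G_rec (c L : ℤ) : G c L = G c (L-1) + q^(L-1) * G c (L-2) := by
  unfold G
  have step : ∀ n:ℤ, q ^ (n^2+c*n) * qbin q (L - n - c) n
      = q ^ (n^2+c*n) * qbin q (L-1 - n - c) n
        + q ^ (n^2+c*n + (L - 2*n - c)) * qbin q (L-1-n-c) (n-1) := by
    intro n
    rw [show (L:ℤ)-1-n-c = (L-n-c) - 1 by ring, qbin_pascal (L-n-c) n, mul_add,
      show (L:ℤ)-n-c-n = L-2*n-c by ring, ← mul_assoc, ← zpow_add₀ q_ne_zero]
  rw [finsum_congr step, finsum_add_distrib (G_fin c (L-1)) (G_fin2 c L)]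
  congr 1
  rw [mul_finsum _ _]
  rw [← finsum_comp_equiv (Equiv.addRight (1:ℤ))
    (f := fun n => q ^ (n^2+c*n + (L - 2*n - c)) * qbin q (L-1-n-c) (n-1))]
  apply finsum_congr
  intro m
  simp only [Equiv.coe_addRight]
  rw [show (m+1:ℤ)-1 = m by ring, show (L:ℤ)-1-(m+1)-c = L-2-m-c by ring,
    show (m+1:ℤ)^2 + c*(m+1) + (L-2*(m+1)-c) = (L-1) + (m^2+c*m) by ring,
    zpow_add₀ q_ne_zero, mul_assoc]

lemma qbin_self (n : ℤ) : qbin q n n = 1 := by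
  unfold qbin
  rw [if_pos le_rfl]
  simp

lemma G_00 : G 0 0 = 1 := by
  unfold G
  rw [finsum_eq_single _ 0]
  · norm_num [qbin_self]
  · intro n hn
    have h : qbin q (0 - n - 0) n = 0 := by
      rcases lt_or_gt_of_ne hn with h | h
      · exact qbin_eq_zero_of_neg (by omega) (by omega)
      · exact qbin_eq_zero_of_gt (by omega)
    rw [h, mul_zero]

lemma G_11 : G 1 (-1) = 1 := by
  unfold G
  rw [finsum_eq_single _ (-1)]
  · norm_num [show (-1:ℤ) - -1 - 1 = -1 by ring, qbin_self]
  · intro n hn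
    have h : qbin q (-1 - n - 1) n = 0 := by
      rcases lt_trichotomy n (-1) with h | h | h
      · exact qbin_eq_zero_of_neg (by omega) (by omega)
      · exact absurd h hn
      · exact qbin_eq_zero_of_gt (by omega)
    rw [h, mul_zero]

lemma G_01 : G 1 0 = 0 := by
  unfold G
  apply finsum_eq_zero_of_forall_eq_zero
  intro n
  have h : qbin q (0 - n - 1) n = 0 := by
    rcases le_or_gt 0 n with h | h
    · exact qbin_eq_zero_of_gt (by omega)
    · exact qbin_eq_zero_of_neg (by omega) (by omega)
  rw [h, mul_zero]

lemma G_10 : G 0 (-1) = 0 := by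
  unfold G
  apply finsum_eq_zero_of_forall_eq_zero
  intro n
  have h : qbin q (-1 - n - 0) n = 0 := by
    rcases le_or_gt 0 n with h | h
    · exact qbin_eq_zero_of_gt (by omega)
    · exact qbin_eq_zero_of_neg (by omega) (by omega)
  rw [h, mul_zero]

/-- For `ν = 1` and `s, b ∈ {0,1}`, the polynomials `F̃_{s,b}(L, q)` satisfy
`F̃_{s,0}(L) = F̃_{s,1}(L-1)`,
`F̃_{s,1}(L) = F̃_{s,0}(L-1) + F̃_{s,1}(L-1) + (q^{L-1}-1) F̃_{s,1}(L-2)`,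
and the initial conditions `F̃_{s,b}(0) = δ_{s,b}`. -/
theorem stmt15 (s b : ℕ) (hs : s ≤ 1) (hb : b ≤ 1) :
    (∀ L : ℤ, Ft s 0 L = Ft s 1 (L - 1)) ∧
    (∀ L : ℤ, Ft s 1 L =
      Ft s 0 (L - 1) + Ft s 1 (L - 1) + (q ^ (L - 1) - 1) * Ft s 1 (L - 2)) ∧
    Ft s b 0 = (if s = b then 1 else 0) := by
  set c : ℤ := if s = 0 then 1 else 0 with hc
  refine ⟨fun L => ?_, fun L => ?_, ?_⟩
  · rw [Ft_eq_G s 0 hs (by norm_num) L, Ft_eq_G s 1 hs (by norm_num) (L-1)]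
    norm_num
  · rw [Ft_eq_G s 1 hs (by norm_num) L, Ft_eq_G s 0 hs (by norm_num) (L-1),
      Ft_eq_G s 1 hs (by norm_num) (L-1), Ft_eq_G s 1 hs (by norm_num) (L-2)]
    norm_num [show (L:ℤ)-1-1 = L-2 from by ring]
    linear_combination G_rec c L
  · rw [Ft_eq_G s b hs hb 0]
    interval_cases s <;> interval_cases b <;> norm_num [hc] <;>
      first
        | exact G_11
        | exact G_01
        | exact G_10
        | exact G_00
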